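/- Let π be a uniformly random permutation of [n]. Then for each i, j ∈ [n], conditionally on the event {π(i) = j}, the back-degree a_n(i) of vertex i in the permutation graph of π follows a hypergeometric distribution with parameters (n-1, i-1, n-j): for each integer a in the admissible range, P(a_n(i) = a | π(i) = j) = C(i-1, a) C(n-i, n-j-a) / C(n-1, n-j). -/

import Mathlib

set_option linter.unusedSectionVars false
set_option maxHeartbeats 1000000

open Finset

/-- Back-degree of vertex `i`: number of `j < i` with `π j > π i`. -/
noncomputable def backDeg (n : ℕ) (π : Equiv.Perm (Fin n)) (i : Fin n) : ℕ :=
  Nat.card {j : Fin n // j < i ∧ π i < π j}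

section Counting

variable {α β : Type*} [Fintype α] [Fintype β] [DecidableEq α] [DecidableEq β]

/-- Glue an equiv on a subset with an equiv on its complement. -/
def glueEquiv (U : Finset α) (T : Finset β) (g : {x // x ∈ U} ≃ {y // y ∈ T})
    (h : {x // x ∉ U} ≃ {y // y ∉ T}) : α ≃ β :=
  ((Equiv.sumCompl (· ∈ U)).symm.trans ((Equiv.sumCongr g h).trans (Equiv.sumCompl (· ∈ T))))

lemma glueEquiv_apply_mem (U : Finset α) (T : Finset β) (g : {x // x ∈ U} ≃ {y // y ∈ T})
    (h : {x // x ∉ U} ≃ {y // y ∉ T}) (x : α) (hx : x ∈ U) :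
    glueEquiv U T g h x = g ⟨x, hx⟩ := by
  simp [glueEquiv, Equiv.sumCompl_symm_apply_of_pos hx]

lemma glueEquiv_apply_not_mem (U : Finset α) (T : Finset β) (g : {x // x ∈ U} ≃ {y // y ∈ T})
    (h : {x // x ∉ U} ≃ {y // y ∉ T}) (x : α) (hx : x ∉ U) :
    glueEquiv U T g h x = h ⟨x, hx⟩ := by
  simp [glueEquiv, Equiv.sumCompl_symm_apply_of_neg hx]

/-- The set of equivs mapping `U` exactly onto `T` is equivalent to pairs of equivs. -/
def fiberEquiv (U : Finset α) (T : Finset β) :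
    (({x // x ∈ U} ≃ {y // y ∈ T}) × ({x // x ∉ U} ≃ {y // y ∉ T})) ≃
      {F : α ≃ β // ∀ x, x ∈ U ↔ F x ∈ T} where
  toFun p := ⟨glueEquiv U T p.1 p.2, by
    intro x
    by_cases hx : x ∈ U
    · simp [glueEquiv_apply_mem U T p.1 p.2 x hx, hx, (p.1 ⟨x, hx⟩).2]
    · simp [glueEquiv_apply_not_mem U T p.1 p.2 x hx, hx, (p.2 ⟨x, hx⟩).2]⟩
  invFun F := (F.1.subtypeEquiv fun x => F.2 x, F.1.subtypeEquiv fun x => not_congr (F.2 x))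
  left_inv p := by
    ext x
    · simp [Equiv.subtypeEquiv_apply, glueEquiv_apply_mem U T p.1 p.2 x.1 x.2]
    · simp [Equiv.subtypeEquiv_apply, glueEquiv_apply_not_mem U T p.1 p.2 x.1 x.2]
  right_inv F := by
    apply Subtype.ext
    apply Equiv.ext
    intro x
    by_cases hx : x ∈ U
    · simp [glueEquiv_apply_mem U T _ _ x hx, Equiv.subtypeEquiv_apply]
    · simp [glueEquiv_apply_not_mem U T _ _ x hx, Equiv.subtypeEquiv_apply]

lemma card_fiber (U : Finset α) (T : Finset β) (hm : Fintype.card α = Fintype.card β)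
    (hUT : U.card = T.card) :
    Fintype.card {F : α ≃ β // ∀ x, x ∈ U ↔ F x ∈ T} =
      Nat.factorial T.card * Nat.factorial (Fintype.card β - T.card) := by
  have e1 : {x // x ∈ U} ≃ {y // y ∈ T} :=
    Fintype.equivOfCardEq (by simp [Fintype.card_coe, hUT])
  have e2 : {x // x ∉ U} ≃ {y // y ∉ T} := by
    apply Fintype.equivOfCardEq
    simp only [Fintype.card_subtype_compl, Fintype.card_coe, hUT, hm]
  rw [← Fintype.card_congr (fiberEquiv U T), Fintype.card_prod,
    Fintype.card_equiv e1, Fintype.card_equiv e2]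
  congr 1
  · rw [Fintype.card_coe, hUT]
  · rw [Fintype.card_subtype_compl, Fintype.card_coe, hUT, hm]

lemma card_equiv_filter (S : Finset α) (T : Finset β) (hm : Fintype.card α = Fintype.card β)
    (a : ℕ) (ha : a ≤ T.card) :
    Fintype.card {f : α ≃ β // (S.filter (fun x => f x ∈ T)).card = a} =
      Nat.choose S.card a * Nat.choose (Fintype.card α - S.card) (T.card - a) *
        (Nat.factorial T.card * Nat.factorial (Fintype.card β - T.card)) := by
  classical
  rw [Fintype.card_subtype]
  set g : (α ≃ β) → Finset α := fun f => univ.filter (fun x => f x ∈ T) with hg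
  have hcardg : ∀ f : α ≃ β, (g f).card = T.card := by
    intro f
    have h : g f = T.map f.symm.toEmbedding := by
      ext x
      simp [hg, Equiv.symm_apply_eq, eq_comm]
    rw [h, card_map]
  have hginter : ∀ f : α ≃ β, g f ∩ S = S.filter (fun x => f x ∈ T) := by
    intro f; ext x; simp [hg, and_comm]
  set 𝒰 := (Finset.univ.powersetCard T.card).filter (fun U : Finset α => (U ∩ S).card = a)
    with h𝒰
  rw [Finset.card_eq_sum_card_fiberwise (f := g) (t := 𝒰)
    (by
      intro f hf
      simp only [mem_coe, mem_filter, mem_univ, true_and] at hf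
      simp only [mem_coe, h𝒰, mem_filter, mem_powersetCard_univ]
      exact ⟨hcardg f, by rw [hginter f, hf]⟩)]
  have hfib : ∀ U ∈ 𝒰,
      (((univ.filter fun f : α ≃ β => (S.filter fun x => f x ∈ T).card = a)).filter
        (fun f => g f = U)).card =
      Nat.factorial T.card * Nat.factorial (Fintype.card β - T.card) := by
    intro U hU
    simp only [h𝒰, mem_filter, mem_powersetCard_univ] at hU
    obtain ⟨hUcard, hUa⟩ := hU
    have heq : ((univ.filter fun f : α ≃ β => (S.filter fun x => f x ∈ T).card = a)).filter
        (fun f => g f = U) = univ.filter (fun f : α ≃ β => ∀ x, x ∈ U ↔ f x ∈ T) := by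
      ext f
      simp only [mem_filter, mem_univ, true_and]
      constructor
      · rintro ⟨hP, rfl⟩
        intro x
        simp [hg]
      · intro hf
        have hgf : g f = U := by
          ext x
          simp only [hg, mem_filter, mem_univ, true_and]
          exact (hf x).symm
        refine ⟨?_, hgf⟩
        rw [← hginter f, hgf, hUa]
    rw [heq, ← Fintype.card_subtype, card_fiber U T hm hUcard]
  rw [Finset.sum_congr rfl hfib, Finset.sum_const, smul_eq_mul]
  congr 1
  have hcard𝒰 : 𝒰.card = ((S.powersetCard a) ×ˢ ((Sᶜ).powersetCard (T.card - a))).card := by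
    apply Finset.card_bij' (i := fun U _ => (U ∩ S, U \ S)) (j := fun p _ => p.1 ∪ p.2)
    · intro U hU
      simp only [h𝒰, mem_filter, mem_powersetCard_univ] at hU
      obtain ⟨hUcard, hUa⟩ := hU
      have h2 : (U ∩ S).card + (U \ S).card = U.card := Finset.card_inter_add_card_sdiff U S
      simp only [mem_product, mem_powersetCard]
      refine ⟨⟨inter_subset_right, hUa⟩, ?_, by omega⟩
      intro x hx
      simp only [mem_sdiff] at hx
      simpa using hx.2
    · intro p hp
      simp only [mem_product, mem_powersetCard] at hp
      obtain ⟨⟨hA, hAcard⟩, hB, hBcard⟩ := hp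
      have hdisj : Disjoint p.1 p.2 := by
        rw [Finset.disjoint_left]
        intro x hx1 hx2
        have := hB hx2
        simp only [mem_compl] at this
        exact this (hA hx1)
      simp only [h𝒰, mem_filter, mem_powersetCard_univ]
      constructor
      · rw [card_union_of_disjoint hdisj, hAcard, hBcard]; omega
      · have h1 : (p.1 ∪ p.2) ∩ S = p.1 := by
          ext x
          simp only [mem_inter, mem_union]
          constructor
          · rintro ⟨hx1 | hx2, hxS⟩
            · exact hx1
            · exact absurd hxS (by simpa using hB hx2)
          · intro hx; exact ⟨Or.inl hx, hA hx⟩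
        rw [h1, hAcard]
    · intro U hU
      simp only
      rw [union_comm, Finset.sdiff_union_inter]
    · intro p hp
      simp only [mem_product, mem_powersetCard] at hp
      obtain ⟨⟨hA, hAcard⟩, hB, hBcard⟩ := hp
      have h1 : (p.1 ∪ p.2) ∩ S = p.1 := by
        ext x
        simp only [mem_inter, mem_union]
        constructor
        · rintro ⟨hx1 | hx2, hxS⟩
          · exact hx1
          · exact absurd hxS (by simpa using hB hx2)
        · intro hx; exact ⟨Or.inl hx, hA hx⟩
      have h2 : (p.1 ∪ p.2) \ S = p.2 := by
        ext x
        simp only [mem_sdiff, mem_union]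
        constructor
        · rintro ⟨hx1 | hx2, hxS⟩
          · exact absurd (hA hx1) hxS
          · exact hx2
        · intro hx; exact ⟨Or.inr hx, by simpa using hB hx⟩
      simp [h1, h2]
  rw [hcard𝒰, Finset.card_product, Finset.card_powersetCard, Finset.card_powersetCard,
    Finset.card_compl]

end Counting

section PermExt
variable {n : ℕ} (i j : Fin n)

def permExtend (f : {x : Fin n // x ≠ i} ≃ {y : Fin n // y ≠ j}) : Equiv.Perm (Fin n) where
  toFun x := if h : x = i then j else f ⟨x, h⟩
  invFun y := if h : y = j then i else f.symm ⟨y, h⟩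
  left_inv x := by
    by_cases h : x = i
    · simp [h]
    · simp only [dif_neg h]
      rw [dif_neg (f ⟨x, h⟩).2]
      simp
  right_inv y := by
    by_cases h : y = j
    · simp [h]
    · simp only [dif_neg h]
      rw [dif_neg (f.symm ⟨y, h⟩).2]
      simp

def permFixEquiv : {π : Equiv.Perm (Fin n) // π i = j} ≃
    ({x : Fin n // x ≠ i} ≃ {y : Fin n // y ≠ j}) where
  toFun p := p.1.subtypeEquiv (fun x => by
    constructor
    · intro hx hc
      exact hx (p.1.injective (hc.trans p.2.symm))
    · intro hx hc
      exact hx (by rw [hc, p.2]))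
  invFun f := ⟨permExtend i j f, by simp [permExtend]⟩
  left_inv p := by
    apply Subtype.ext
    apply Equiv.ext
    intro x
    by_cases h : x = i
    · simp [permExtend, h, p.2]
    · simp [permExtend, h]
  right_inv f := by
    apply Equiv.ext
    intro x
    apply Subtype.ext
    simp [permExtend, x.2]

end PermExt

/-- for a uniformly random permutation, conditionally on `π i = j`
the back-degree of vertex `i` is hypergeometric with parameters
`(n-1, i-1, n-j)` (0-indexed: `i - 1 = i.val`, `n - j = n - 1 - j.val`). -/
theorem backDeg_cond_hypergeometric (n : ℕ) (i j : Fin n) (a : ℕ)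
    (h1 : a ≤ i.val) (h2 : a ≤ n - 1 - j.val)
    (h3 : n - 1 - j.val ≤ a + (n - 1 - i.val)) :
    (Nat.card {π : Equiv.Perm (Fin n) // backDeg n π i = a ∧ π i = j} : ℝ) /
      (Nat.card {π : Equiv.Perm (Fin n) // π i = j} : ℝ) =
    ((Nat.choose i.val a : ℝ) * (Nat.choose (n - 1 - i.val) (n - 1 - j.val - a) : ℝ)) /
      (Nat.choose (n - 1) (n - 1 - j.val) : ℝ) := by
  classical
  set S : Finset {x : Fin n // x ≠ i} := univ.filter (fun x => x.1 < i) with hS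
  set T : Finset {y : Fin n // y ≠ j} := univ.filter (fun y => j < y.1) with hT
  have hcardA : Fintype.card {x : Fin n // x ≠ i} = n - 1 := by
    simp [Fintype.card_subtype_compl]
  have hcardB : Fintype.card {y : Fin n // y ≠ j} = n - 1 := by
    simp [Fintype.card_subtype_compl]
  have hm : Fintype.card {x : Fin n // x ≠ i} = Fintype.card {y : Fin n // y ≠ j} :=
    hcardA.trans hcardB.symm
  have hScard : S.card = i.val := by
    rw [← Fin.card_Iio (b := i)]
    apply Finset.card_bij (fun x _ => x.1)
    · intro x hx
      simp only [hS, mem_filter, mem_univ, true_and] at hx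
      exact mem_Iio.mpr hx
    · intro x _ y _ hxy
      exact Subtype.ext hxy
    · intro y hy
      exact ⟨⟨y, ne_of_lt (mem_Iio.mp hy)⟩, by simp [hS, mem_Iio.mp hy], rfl⟩
  have hTcard : T.card = n - 1 - j.val := by
    rw [← Fin.card_Ioi (a := j)]
    apply Finset.card_bij (fun x _ => x.1)
    · intro x hx
      simp only [hT, mem_filter, mem_univ, true_and] at hx
      exact mem_Ioi.mpr hx
    · intro x _ y _ hxy
      exact Subtype.ext hxy
    · intro y hy
      exact ⟨⟨y, (ne_of_lt (mem_Ioi.mp hy)).symm⟩, by simp [hT, mem_Ioi.mp hy], rfl⟩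
  have hbridge : ∀ p : {π : Equiv.Perm (Fin n) // π i = j},
      backDeg n p.1 i = (S.filter (fun x => permFixEquiv i j p x ∈ T)).card := by
    intro p
    rw [backDeg, ← Fintype.card_coe, ← Nat.card_eq_fintype_card]
    apply Nat.card_congr
    exact
      { toFun := fun z => ⟨⟨z.1, ne_of_lt z.2.1⟩, by
          simp only [hS, hT, mem_filter, mem_univ, true_and]
          exact ⟨z.2.1, p.2.symm.trans_lt z.2.2⟩⟩
        invFun := fun w => ⟨w.1.1, by
          have hw := w.2
          simp only [hS, hT, mem_filter, mem_univ, true_and] at hw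
          exact ⟨hw.1, p.2.trans_lt hw.2⟩⟩
        left_inv := fun z => rfl
        right_inv := fun w => by
          apply Subtype.ext
          apply Subtype.ext
          rfl }
  have haT : a ≤ T.card := by rw [hTcard]; exact h2
  have hnum : Nat.card {π : Equiv.Perm (Fin n) // backDeg n π i = a ∧ π i = j} =
      Fintype.card {f : ({x : Fin n // x ≠ i} ≃ {y : Fin n // y ≠ j}) //
        (S.filter (fun x => f x ∈ T)).card = a} := by
    rw [← Nat.card_eq_fintype_card]
    apply Nat.card_congr
    refine Equiv.trans ?_ (Equiv.subtypeEquiv (p := fun p : {π : Equiv.Perm (Fin n) // π i = j} => backDeg n p.1 i = a) (q := fun f => (S.filter (fun x => f x ∈ T)).card = a) (permFixEquiv i j) (fun p => by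
        show backDeg n p.1 i = a ↔ (S.filter (fun x => (permFixEquiv i j p) x ∈ T)).card = a
        rw [hbridge p]))
    exact
      { toFun := fun q => ⟨⟨q.1, q.2.2⟩, q.2.1⟩
        invFun := fun q => ⟨q.1.1, q.2, q.1.2⟩
        left_inv := fun _ => rfl
        right_inv := fun _ => rfl }
  have hden : Nat.card {π : Equiv.Perm (Fin n) // π i = j} = Nat.factorial (n - 1) := by
    rw [Nat.card_congr (permFixEquiv i j), Nat.card_eq_fintype_card,
      Fintype.card_equiv (Fintype.equivOfCardEq hm), hcardA]
  rw [hnum, card_equiv_filter S T hm a haT, hden, hScard, hTcard, hcardA, hcardB]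
  set t := n - 1 - j.val with ht
  have htle : t ≤ n - 1 := Nat.sub_le _ _
  have key : (n - 1).choose t * Nat.factorial t * Nat.factorial (n - 1 - t) =
      Nat.factorial (n - 1) := Nat.choose_mul_factorial_mul_factorial htle
  have hchoosepos : (0 : ℝ) < ((n - 1).choose t : ℝ) := by
    exact_mod_cast Nat.choose_pos htle
  have hfac1 : (Nat.factorial t : ℝ) ≠ 0 := by exact_mod_cast Nat.factorial_ne_zero t
  have hfac2 : (Nat.factorial (n - 1 - t) : ℝ) ≠ 0 := by
    exact_mod_cast Nat.factorial_ne_zero (n - 1 - t)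
  have keyR : ((n - 1).choose t : ℝ) * (Nat.factorial t : ℝ) * (Nat.factorial (n - 1 - t) : ℝ) =
      (Nat.factorial (n - 1) : ℝ) := by exact_mod_cast key
  rw [← keyR]
  push_cast
  field_simp
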